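/- Suppose the vertex set of a graph G is partitioned into two nonempty sets W and Z such that every vertex of W is adjacent in G to every vertex of Z. Suppose G[W] has an orientation O_W together with a partition of W into U₁ and V₁ such that any two vertices both in U₁ or both in V₁ are at directed distance at most 2 in O_W, and every vertex of U₁ has both an in-neighbor and an out-neighbor in V₁ and vice versa. If |Z| = 2, then G has an orientation of diameter at most two. -/

import Mathlib

/-- `D` is an orientation of the simple graph `G`: every arc lies on an edge of `G`,
and every edge of `G` gets exactly one direction. -/
def IsOrientation {V : Type*} (G : SimpleGraph V) (D : V → V → Prop) : Prop :=
  (∀ u v, D u v → G.Adj u v) ∧ (∀ u v, G.Adj u v → (D u v ↔ ¬ D v u))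

/-- The directed distance from `u` to `v` in the digraph `D` is at most 2. -/
def DistLE2 {V : Type*} (D : V → V → Prop) (u v : V) : Prop :=
  D u v ∨ ∃ w, D u w ∧ D w v

/-- `D` is an orientation of the subgraph of `G` induced by `W`. -/
def IsOrientationOn {V : Type*} (G : SimpleGraph V) (W : Set V) (D : V → V → Prop) : Prop :=
  (∀ u v, D u v → u ∈ W ∧ v ∈ W ∧ G.Adj u v) ∧
  (∀ u v, u ∈ W → v ∈ W → G.Adj u v → (D u v ↔ ¬ D v u))

/-- If `V(G)` is partitioned into nonempty `W` and `Z` with all `W`–`Z` edges present,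
`G[W]` has a non-trivial good orientation, and `|Z| = 2`, then `G` has an orientation of
diameter at most two. -/
theorem stmt5 {V : Type*} [Fintype V] (G : SimpleGraph V)
    (W Z : Set V) (hWZ : Disjoint W Z) (huniv : W ∪ Z = Set.univ)
    (hWne : W.Nonempty) (hZcard : Nat.card Z = 2)
    (hcross : ∀ w ∈ W, ∀ z ∈ Z, G.Adj w z)
    (D : V → V → Prop) (hD : IsOrientationOn G W D)
    (U₁ V₁ : Set V) (hpart : U₁ ∪ V₁ = W) (hdisj : Disjoint U₁ V₁)
    (hdist : ∀ x y, x ≠ y → ((x ∈ U₁ ∧ y ∈ U₁) ∨ (x ∈ V₁ ∧ y ∈ V₁)) → DistLE2 D x y)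
    (hnt₁ : ∀ u ∈ U₁, (∃ v ∈ V₁, D v u) ∧ (∃ v ∈ V₁, D u v))
    (hnt₂ : ∀ u ∈ V₁, (∃ v ∈ U₁, D v u) ∧ (∃ v ∈ U₁, D u v)) :
    ∃ O : V → V → Prop, IsOrientation G O ∧ ∀ u v, u ≠ v → DistLE2 O u v := by
  classical
  have hZ2 : Z.ncard = 2 := by rw [← Nat.card_coe_set_eq]; exact hZcard
  obtain ⟨a, b, hab, rfl⟩ := Set.ncard_eq_two.mp hZ2
  have haZ : a ∈ ({a, b} : Set V) := by simp
  have hbZ : b ∈ ({a, b} : Set V) := by simp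
  have haW : a ∉ W := fun h => Set.disjoint_left.mp hWZ h haZ
  have hbW : b ∉ W := fun h => Set.disjoint_left.mp hWZ h hbZ
  have hUW : U₁ ⊆ W := by rw [← hpart]; exact Set.subset_union_left
  have hVW : V₁ ⊆ W := by rw [← hpart]; exact Set.subset_union_right
  have hWU : ∀ x ∈ W, x ∈ U₁ ∨ x ∈ V₁ := by
    intro x hx; rw [← hpart] at hx; exact hx
  have hUV : ∀ x, x ∈ U₁ → x ∉ V₁ := fun x h => Set.disjoint_left.mp hdisj h
  have hcases : ∀ x : V, x ∈ W ∨ x = a ∨ x = b := by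
    intro x
    have hx : x ∈ W ∪ ({a, b} : Set V) := huniv ▸ Set.mem_univ x
    rcases hx with h | h
    · exact Or.inl h
    · exact Or.inr (by simpa using h)
  have hadja : ∀ w ∈ W, G.Adj w a := fun w hw => hcross w hw a haZ
  have hadjb : ∀ w ∈ W, G.Adj w b := fun w hw => hcross w hw b hbZ
  -- nonemptiness of parts
  obtain ⟨w0, hw0⟩ := hWne
  have hUVne : U₁.Nonempty ∧ V₁.Nonempty := by
    rcases hWU w0 hw0 with h | h
    · obtain ⟨v, hv, -⟩ := (hnt₁ w0 h).1
      exact ⟨⟨w0, h⟩, ⟨v, hv⟩⟩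
    · obtain ⟨u, hu, -⟩ := (hnt₂ w0 h).1
      exact ⟨⟨u, hu⟩, ⟨w0, h⟩⟩
  obtain ⟨⟨u0, hu0⟩, ⟨v0, hv0⟩⟩ := hUVne
  set O : V → V → Prop := fun x y =>
    D x y ∨ (x = a ∧ y ∈ U₁) ∨ (x ∈ U₁ ∧ y = b) ∨ (x = b ∧ y ∈ V₁) ∨
      (x ∈ V₁ ∧ y = a) ∨ (x = a ∧ y = b ∧ G.Adj a b) with hOdef
  have hDW : ∀ x y, D x y → x ∈ W ∧ y ∈ W ∧ G.Adj x y := hD.1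
  -- characterizations
  have h1 : ∀ x y, x ∈ W → y ∈ W → (O x y ↔ D x y) := by
    intro x y hx hy
    constructor
    · rintro (h | ⟨rfl, -⟩ | ⟨-, rfl⟩ | ⟨rfl, -⟩ | ⟨-, rfl⟩ | ⟨rfl, -, -⟩)
      · exact h
      · exact (haW hx).elim
      · exact (hbW hy).elim
      · exact (hbW hx).elim
      · exact (haW hy).elim
      · exact (haW hx).elim
    · exact Or.inl
  have h2 : ∀ x, x ∈ W → (O x a ↔ x ∈ V₁) := by
    intro x hx
    constructor
    · rintro (h | ⟨rfl, -⟩ | ⟨-, h⟩ | ⟨rfl, -⟩ | ⟨h, -⟩ | ⟨rfl, -, -⟩)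
      · exact (haW (hDW _ _ h).2.1).elim
      · exact (haW hx).elim
      · exact (hab h).elim
      · exact (hbW hx).elim
      · exact h
      · exact (haW hx).elim
    · intro h; exact Or.inr (Or.inr (Or.inr (Or.inr (Or.inl ⟨h, rfl⟩))))
  have h3 : ∀ x, x ∈ W → (O a x ↔ x ∈ U₁) := by
    intro x hx
    constructor
    · rintro (h | ⟨-, h⟩ | ⟨h, -⟩ | ⟨h, -⟩ | ⟨h, -⟩ | ⟨-, rfl, -⟩)
      · exact (haW (hDW _ _ h).1).elim
      · exact h
      · exact (haW (hUW h)).elim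
      · exact (hab h).elim
      · exact (haW (hVW h)).elim
      · exact (hbW hx).elim
    · intro h; exact Or.inr (Or.inl ⟨rfl, h⟩)
  have h4 : ∀ x, x ∈ W → (O x b ↔ x ∈ U₁) := by
    intro x hx
    constructor
    · rintro (h | ⟨rfl, -⟩ | ⟨h, -⟩ | ⟨rfl, -⟩ | ⟨-, h⟩ | ⟨rfl, -, -⟩)
      · exact (hbW (hDW _ _ h).2.1).elim
      · exact (haW hx).elim
      · exact h
      · exact (hbW hx).elim
      · exact (hab h.symm).elim
      · exact (haW hx).elim
    · intro h; exact Or.inr (Or.inr (Or.inl ⟨h, rfl⟩))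
  have h5 : ∀ x, x ∈ W → (O b x ↔ x ∈ V₁) := by
    intro x hx
    constructor
    · rintro (h | ⟨h, -⟩ | ⟨h, -⟩ | ⟨-, h⟩ | ⟨h, -⟩ | ⟨h, -, -⟩)
      · exact (hbW (hDW _ _ h).1).elim
      · exact (hab h.symm).elim
      · exact (hbW (hUW h)).elim
      · exact h
      · exact (hbW (hVW h)).elim
      · exact (hab h.symm).elim
    · intro h; exact Or.inr (Or.inr (Or.inr (Or.inl ⟨rfl, h⟩)))
  have h6 : O a b ↔ G.Adj a b := by
    constructor
    · rintro (h | ⟨-, h⟩ | ⟨h, -⟩ | ⟨h, -⟩ | ⟨h, -⟩ | ⟨-, -, h⟩)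
      · exact (haW (hDW _ _ h).1).elim
      · exact (hbW (hUW h)).elim
      · exact (haW (hUW h)).elim
      · exact (hab h).elim
      · exact (haW (hVW h)).elim
      · exact h
    · intro h; exact Or.inr (Or.inr (Or.inr (Or.inr (Or.inr ⟨rfl, rfl, h⟩))))
  have h7 : ¬ O b a := by
    rintro (h | ⟨h, -⟩ | ⟨h, -⟩ | ⟨-, h⟩ | ⟨h, -⟩ | ⟨h, -, -⟩)
    · exact hbW (hDW _ _ h).1
    · exact hab h.symm
    · exact hbW (hUW h)
    · exact haW (hVW h)
    · exact hbW (hVW h)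
    · exact hab h.symm
  have hmono : ∀ x y, DistLE2 D x y → DistLE2 O x y := by
    rintro x y (h | ⟨w, h1', h2'⟩)
    · exact Or.inl (Or.inl h)
    · exact Or.inr ⟨w, Or.inl h1', Or.inl h2'⟩
  refine ⟨O, ⟨?_, ?_⟩, ?_⟩
  · -- arcs lie on edges
    rintro x y (h | ⟨rfl, h⟩ | ⟨h, rfl⟩ | ⟨rfl, h⟩ | ⟨h, rfl⟩ | ⟨rfl, rfl, h⟩)
    · exact (hDW _ _ h).2.2
    · exact (hadja y (hUW h)).symm
    · exact hadjb x (hUW h)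
    · exact (hadjb y (hVW h)).symm
    · exact hadja x (hVW h)
    · exact h
  · -- each edge oriented exactly one way
    intro u v hadj
    rcases hcases u with hu | rfl | rfl <;> rcases hcases v with hv | rfl | rfl
    · rw [h1 u v hu hv, h1 v u hv hu]; exact hD.2 u v hu hv hadj
    · rw [h2 u hu, h3 u hu]
      rcases hWU u hu with h | h
      · simp [h, hUV u h]
      · have hnu : u ∉ U₁ := fun hh => hUV u hh h
        simp [h, hnu]
    · rw [h4 u hu, h5 u hu]
      rcases hWU u hu with h | h
      · simp [h, hUV u h]
      · have hnu : u ∉ U₁ := fun hh => hUV u hh h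
        simp [h, hnu]
    · rw [h3 v hv, h2 v hv]
      rcases hWU v hv with h | h
      · simp [h, hUV v h]
      · have hnv : v ∉ U₁ := fun hh => hUV v hh h
        simp [h, hnv]
    · exact absurd hadj (G.loopless.irrefl _)
    · simp [h6.mpr hadj, h7]
    · rw [h5 v hv, h4 v hv]
      rcases hWU v hv with h | h
      · simp [h, hUV v h]
      · have hnv : v ∉ U₁ := fun hh => hUV v hh h
        simp [h, hnv]
    · simp [h7, h6.mpr hadj.symm]
    · exact absurd hadj (G.loopless.irrefl _)
  · -- diameter at most 2
    intro u v huv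
    -- helper arcs
    have arcaU : ∀ x ∈ U₁, O a x := fun x hx => Or.inr (Or.inl ⟨rfl, hx⟩)
    have arcUb : ∀ x ∈ U₁, O x b := fun x hx => Or.inr (Or.inr (Or.inl ⟨hx, rfl⟩))
    have arcbV : ∀ x ∈ V₁, O b x := fun x hx => Or.inr (Or.inr (Or.inr (Or.inl ⟨rfl, hx⟩)))
    have arcVa : ∀ x ∈ V₁, O x a := fun x hx =>
      Or.inr (Or.inr (Or.inr (Or.inr (Or.inl ⟨hx, rfl⟩))))
    rcases hcases u with hu | rfl | rfl <;> rcases hcases v with hv | rfl | rfl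
    · -- both in W
      rcases hWU u hu with h | h <;> rcases hWU v hv with h' | h'
      · exact hmono u v (hdist u v huv (Or.inl ⟨h, h'⟩))
      · exact Or.inr ⟨b, arcUb u h, arcbV v h'⟩
      · exact Or.inr ⟨a, arcVa u h, arcaU v h'⟩
      · exact hmono u v (hdist u v huv (Or.inr ⟨h, h'⟩))
    · -- u ∈ W, v = a
      rcases hWU u hu with h | h
      · obtain ⟨x, hx, hDx⟩ := (hnt₁ u h).2
        exact Or.inr ⟨x, Or.inl hDx, arcVa x hx⟩
      · exact Or.inl (arcVa u h)
    · -- u ∈ W, v = b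
      rcases hWU u hu with h | h
      · exact Or.inl (arcUb u h)
      · obtain ⟨x, hx, hDx⟩ := (hnt₂ u h).2
        exact Or.inr ⟨x, Or.inl hDx, arcUb x hx⟩
    · -- u = a, v ∈ W
      rcases hWU v hv with h | h
      · exact Or.inl (arcaU v h)
      · obtain ⟨x, hx, hDx⟩ := (hnt₂ v h).1
        exact Or.inr ⟨x, arcaU x hx, Or.inl hDx⟩
    · exact absurd rfl huv
    · -- a to b
      exact Or.inr ⟨u0, arcaU u0 hu0, arcUb u0 hu0⟩
    · -- u = b, v ∈ W
      rcases hWU v hv with h | h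
      · obtain ⟨x, hx, hDx⟩ := (hnt₁ v h).1
        exact Or.inr ⟨x, arcbV x hx, Or.inl hDx⟩
      · exact Or.inl (arcbV v h)
    · -- b to a
      exact Or.inr ⟨v0, arcbV v0 hv0, arcVa v0 hv0⟩
    · exact absurd rfl huv
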